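/- For n ≥ 3, the subgroup b_n(2,(1³)) of special derivations in degree 2 supported on the monomial set {permutations of (1,2,3)} is free abelian of rank 1, generated by x_1^* ⊗ [x_3,x_2,x_1] − x_2^* ⊗ [x_3,x_1,x_2] + x_3^* ⊗ [x_2,x_1,x_3]. -/

import Mathlib

open scoped TensorProduct

/-- The degree-`k` homogeneous part of the free Lie ring on `n` generators. -/
noncomputable def Ln (n : ℕ) : ℕ → Submodule ℤ (FreeLieAlgebra ℤ (Fin n))
  | 0 => ⊥
  | 1 => Submodule.span ℤ (Set.range (FreeLieAlgebra.of ℤ))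
  | (k+2) => Submodule.span ℤ
      {y | ∃ a ∈ Ln n (k+1), ∃ i : Fin n, y = ⁅a, FreeLieAlgebra.of ℤ i⁆}

/-- The tangential derivation module `p_n(k)`, in the representation
`H^* ⊗ L_n(k+1) ≅ (Fin n → L_n)` (the `i`-th component records `C_i` in
`Σᵢ x_i^* ⊗ C_i`), spanned by the elements `x_i^* ⊗ [c, x_i]` with `c ∈ L_n(k)`. -/
noncomputable def pnM (n k : ℕ) : Submodule ℤ (Fin n → FreeLieAlgebra ℤ (Fin n)) :=
  Submodule.span ℤ
    {f | ∃ i : Fin n, ∃ c ∈ Ln n k, f = Pi.single i ⁅c, FreeLieAlgebra.of ℤ i⁆}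

/-- Summation map sending `Σᵢ x_i^* ⊗ C_i` to `Σᵢ C_i`. -/
noncomputable def sumMap (n : ℕ) :
    (Fin n → FreeLieAlgebra ℤ (Fin n)) →ₗ[ℤ] FreeLieAlgebra ℤ (Fin n) :=
  LinearMap.lsum ℤ (fun _ : Fin n => FreeLieAlgebra ℤ (Fin n)) ℤ (fun _ => LinearMap.id)

/-- Auxiliary: target matrices for the separating representation. -/
noncomputable def testRep (n : ℕ) : Fin n → Matrix (Fin 2) (Fin 2) ℤ := fun i =>
  if (i : ℕ) = 0 then !![1, -1; 0, 1]
  else if (i : ℕ) = 1 then !![-1, 1; 1, -1]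
  else if (i : ℕ) = 2 then !![-1, 0; 1, 0] else 0

attribute [local instance] LieRing.ofAssociativeRing

theorem bn_two_cube (n : ℕ) (hn : 3 ≤ n) :
    let x : Fin n → FreeLieAlgebra ℤ (Fin n) := FreeLieAlgebra.of ℤ
    let i0 : Fin n := ⟨0, by omega⟩
    let i1 : Fin n := ⟨1, by omega⟩
    let i2 : Fin n := ⟨2, by omega⟩
    let pα : Submodule ℤ (Fin n → FreeLieAlgebra ℤ (Fin n)) :=
      Submodule.span ℤ
        {Pi.single i0 ⁅⁅x i2, x i1⁆, x i0⁆,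
         Pi.single i1 ⁅⁅x i2, x i0⁆, x i1⁆,
         Pi.single i2 ⁅⁅x i1, x i0⁆, x i2⁆}
    let g : Fin n → FreeLieAlgebra ℤ (Fin n) :=
      Pi.single i0 ⁅⁅x i2, x i1⁆, x i0⁆ - Pi.single i1 ⁅⁅x i2, x i0⁆, x i1⁆ +
        Pi.single i2 ⁅⁅x i1, x i0⁆, x i2⁆
    pα ⊓ LinearMap.ker (sumMap n) = Submodule.span ℤ {g} ∧
      Module.finrank ℤ ↥(pα ⊓ LinearMap.ker (sumMap n)) = 1 := by
  intro x i0 i1 i2 pα g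
  -- abbreviations
  set A : FreeLieAlgebra ℤ (Fin n) := ⁅⁅x i2, x i1⁆, x i0⁆ with hA
  set B : FreeLieAlgebra ℤ (Fin n) := ⁅⁅x i2, x i0⁆, x i1⁆ with hB
  set C : FreeLieAlgebra ℤ (Fin n) := ⁅⁅x i1, x i0⁆, x i2⁆ with hC
  have h01 : i0 ≠ i1 := by simp [i0, i1, Fin.ext_iff]
  have h02 : i0 ≠ i2 := by simp [i0, i2, Fin.ext_iff]
  have h12 : i1 ≠ i2 := by simp [i1, i2, Fin.ext_iff]
  -- Jacobi identity
  have hJac : A = B - C := by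
    rw [hA, hB, hC, lie_lie, ← lie_skew (x i1) ⁅x i2, x i0⁆,
      ← lie_skew (x i2) ⁅x i1, x i0⁆]
    abel
  -- the summation map on single functions
  have hsum : ∀ (j : Fin n) (v : FreeLieAlgebra ℤ (Fin n)),
      sumMap n (Pi.single j v) = v := by
    intro j v
    simp [sumMap, LinearMap.lsum_apply, LinearMap.sum_apply, Finset.sum_pi_single]
  -- the separating representation
  let φ : FreeLieAlgebra ℤ (Fin n) →ₗ⁅ℤ⁆ Matrix (Fin 2) (Fin 2) ℤ :=
    FreeLieAlgebra.lift ℤ (testRep n)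
  have hφ0 : φ (x i0) = !![1, -1; 0, 1] := by
    rw [show φ (x i0) = testRep n i0 from FreeLieAlgebra.lift_of_apply _ _]
    simp [testRep, i0]
  have hφ1 : φ (x i1) = !![-1, 1; 1, -1] := by
    rw [show φ (x i1) = testRep n i1 from FreeLieAlgebra.lift_of_apply _ _]
    simp [testRep, i1]
  have hφ2 : φ (x i2) = !![-1, 0; 1, 0] := by
    rw [show φ (x i2) = testRep n i2 from FreeLieAlgebra.lift_of_apply _ _]
    simp [testRep, i2]
  have hφA : φ A = !![1, 2; 0, -1] := by
    rw [hA, LieHom.map_lie, LieHom.map_lie, hφ0, hφ1, hφ2]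
    ext i j
    fin_cases i <;> fin_cases j <;>
      simp [Ring.lie_def, Matrix.mul_apply, Fin.sum_univ_two]
  have hφB : φ B = !![1, 2; -2, -1] := by
    rw [hB, LieHom.map_lie, LieHom.map_lie, hφ0, hφ1, hφ2]
    ext i j
    fin_cases i <;> fin_cases j <;>
      simp [Ring.lie_def, Matrix.mul_apply, Fin.sum_univ_two]
  have hφC : φ C = !![0, 0; -2, 0] := by
    rw [hC, LieHom.map_lie, LieHom.map_lie, hφ0, hφ1, hφ2]
    ext i j
    fin_cases i <;> fin_cases j <;>
      simp [Ring.lie_def, Matrix.mul_apply, Fin.sum_univ_two]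
  -- the main equality
  have hmain : pα ⊓ LinearMap.ker (sumMap n) = Submodule.span ℤ {g} := by
    apply le_antisymm
    · intro v hv
      rw [Submodule.mem_inf] at hv
      obtain ⟨hv1, hv2⟩ := hv
      rw [show pα = Submodule.span ℤ
        {Pi.single i0 A, Pi.single i1 B, Pi.single i2 C} from rfl,
        Submodule.mem_span_insert] at hv1
      obtain ⟨a, w, hw, rfl⟩ := hv1
      rw [Submodule.mem_span_pair] at hw
      obtain ⟨b, c, rfl⟩ := hw
      rw [LinearMap.mem_ker] at hv2
      have hs : a • A + (b • B + c • C) = 0 := by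
        rw [← hv2]
        simp [map_add, map_smul, hsum]
      have hE : (a + b) • B + (c - a) • C = 0 := by
        rw [← hs, hJac]
        simp only [smul_sub, add_smul, sub_smul]
        abel
      have hEφ : φ ((a + b) • B + (c - a) • C) = 0 := by
        rw [hE, map_zero]
      rw [map_add, map_smul, map_smul, hφB, hφC] at hEφ
      have e1 : (a + b) * 1 + (c - a) * 0 = 0 := by
        have := congrFun (congrFun hEφ 0) 0
        simpa using this
      have e2 : (a + b) * (-2) + (c - a) * (-2) = 0 := by
        have := congrFun (congrFun hEφ 1) 0
        simpa using this
      have hab : b = -a := by omega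
      have hca : c = a := by omega
      rw [Submodule.mem_span_singleton]
      refine ⟨a, ?_⟩
      rw [hab, hca]
      simp only [g, smul_add, smul_sub, smul_neg, neg_smul]
      abel
    · rw [Submodule.span_le, Set.singleton_subset_iff]
      constructor
      · have e1 : Pi.single i0 A ∈ pα := Submodule.subset_span (Set.mem_insert _ _)
        have e2 : Pi.single i1 B ∈ pα :=
          Submodule.subset_span (Set.mem_insert_of_mem _ (Set.mem_insert _ _))
        have e3 : Pi.single i2 C ∈ pα :=
          Submodule.subset_span (Set.mem_insert_of_mem _ (Set.mem_insert_of_mem _ rfl))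
        exact add_mem (sub_mem e1 e2) e3
      · rw [SetLike.mem_coe, LinearMap.mem_ker]
        simp only [g, map_add, map_sub, hsum]
        show A - B + C = 0
        rw [hJac]
        abel
  refine ⟨hmain, ?_⟩
  -- finrank computation
  have hg : g ∈ Submodule.span ℤ {g} := Submodule.mem_span_singleton_self g
  have hinj : ∀ m : ℤ, m • g = 0 → m = 0 := by
    intro m hm
    have h0 : m • A = 0 := by
      have h := congrFun hm i0
      simp only [g, Pi.smul_apply, Pi.add_apply, Pi.sub_apply, Pi.single_eq_same,
        Pi.single_eq_of_ne h01, Pi.single_eq_of_ne h02, sub_zero, add_zero,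
        Pi.zero_apply] at h
      exact h
    have hφ0' : φ (m • A) = 0 := by rw [h0, map_zero]
    rw [map_smul, hφA] at hφ0'
    have := congrFun (congrFun hφ0' 0) 0
    simpa using this
  let e : ℤ →ₗ[ℤ] ↥(Submodule.span ℤ {g}) :=
    LinearMap.toSpanSingleton ℤ _ (⟨g, hg⟩ : ↥(Submodule.span ℤ {g}))
  have hbij : Function.Bijective e := by
    constructor
    · intro m m' hmm'
      simp only [e, LinearMap.toSpanSingleton_apply] at hmm'
      have h2 : m • g = m' • g := congrArg Subtype.val hmm'
      have h3 : (m - m') • g = 0 := by rw [sub_smul, h2, sub_self]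
      have := hinj _ h3
      omega
    · rintro ⟨v, hv⟩
      rw [Submodule.mem_span_singleton] at hv
      obtain ⟨m, rfl⟩ := hv
      exact ⟨m, Subtype.ext (by simp [e, LinearMap.toSpanSingleton_apply])⟩
  rw [hmain]
  rw [← (LinearEquiv.ofBijective e hbij).finrank_eq]
  exact Module.finrank_self ℤ
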